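/- Let Z ⊆ B(H₀) be a JC*-triple and (T, ρ) a universal enveloping TRO of Z. Then there exists a continuous complex-linear bijection θ : T → T such that θ(x y* z) = θ(z) θ(y)* θ(x) for all x,y,z ∈ T, θ ∘ θ = id_T, and θ ∘ ρ = ρ (the canonical TRO-antiautomorphism of order 2). -/

import Mathlib

noncomputable section

open Matrix

/-- A bundled complex Hilbert space. -/
structure HilbertC : Type 1 where
  carrier : Type
  [nacg : NormedAddCommGroup carrier]
  [ips : InnerProductSpace ℂ carrier]
  [cs : CompleteSpace carrier]

attribute [instance] HilbertC.nacg HilbertC.ips HilbertC.cs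

/-- The algebra `B(H)` of bounded operators on a complex Hilbert space `H`. -/
abbrev BH (H : HilbertC) := H.carrier →L[ℂ] H.carrier

/-- The Jordan triple product `{x,y,z} = (1/2)(x y* z + z y* x)`. -/
def jtp {A : Type*} [NonUnitalRing A] [StarRing A] [Module ℂ A] (x y z : A) : A :=
  (2⁻¹ : ℂ) • (x * star y * z + z * star y * x)

/-- `Z` is a JC*-triple: a closed complex subspace of `B(H)` closed under the
Jordan triple product. -/
def IsJCTriple {H : HilbertC} (Z : Submodule ℂ (BH H)) : Prop :=
  IsClosed (Z : Set (BH H)) ∧ ∀ x ∈ Z, ∀ y ∈ Z, ∀ z ∈ Z, jtp x y z ∈ Z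

/-- `T` is a TRO: a closed complex subspace of `B(H)` with `x y* z ∈ T`. -/
def IsTROsub {H : HilbertC} (T : Submodule ℂ (BH H)) : Prop :=
  IsClosed (T : Set (BH H)) ∧ ∀ x ∈ T, ∀ y ∈ T, ∀ z ∈ T, x * star y * z ∈ T

/-- The smallest closed complex subspace of `B(H)` containing `S` and closed under
the ternary product `(x,y,z) ↦ x y* z`. -/
def troClosure {H : HilbertC} (S : Set (BH H)) : Submodule ℂ (BH H) :=
  sInf {W : Submodule ℂ (BH H) | IsClosed (W : Set (BH H)) ∧ S ⊆ W ∧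
    ∀ x ∈ W, ∀ y ∈ W, ∀ z ∈ W, x * star y * z ∈ W}

/-- A triple homomorphism from a subspace `Z ⊆ B(H)` into `B(K)`. -/
def IsTripleHomB {H K : HilbertC} (Z : Submodule ℂ (BH H)) (φ : ↥Z →L[ℂ] BH K) : Prop :=
  ∀ x y z w : ↥Z, (w : BH H) = jtp (x : BH H) (y : BH H) (z : BH H) →
    φ w = jtp (φ x) (φ y) (φ z)

/-- A triple homomorphism from a subspace `Z ⊆ B(H)` into a subspace `U ⊆ B(K)`. -/
def IsTripleHomInto {H K : HilbertC} (Z : Submodule ℂ (BH H)) (U : Submodule ℂ (BH K))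
    (α : ↥Z →L[ℂ] ↥U) : Prop :=
  ∀ x y z w : ↥Z, (w : BH H) = jtp (x : BH H) (y : BH H) (z : BH H) →
    ((α w : BH K)) = jtp ((α x : BH K)) ((α y : BH K)) ((α z : BH K))

/-- A TRO-homomorphism between subspaces of operator algebras. -/
def IsTROHom {H K : HilbertC} (T : Submodule ℂ (BH H)) (U : Submodule ℂ (BH K))
    (β : ↥T →L[ℂ] ↥U) : Prop :=
  ∀ x y z w : ↥T, (w : BH H) = (x : BH H) * star (y : BH H) * (z : BH H) →
    ((β w : BH K)) = (β x : BH K) * star ((β y : BH K)) * ((β z : BH K))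

/-- `(T, ρ)` is a universal enveloping TRO of `Z`. -/
def IsUnivTRO {H Hh : HilbertC} (Z : Submodule ℂ (BH H)) (T : Submodule ℂ (BH Hh))
    (ρ : ↥Z →L[ℂ] ↥T) : Prop :=
  IsTROsub T ∧ IsTripleHomInto Z T ρ ∧
  troClosure (Set.range fun z : ↥Z => (ρ z : BH Hh)) = T ∧
  ∀ (K : HilbertC) (U : Submodule ℂ (BH K)), IsTROsub U →
    ∀ α : ↥Z →L[ℂ] ↥U, IsTripleHomInto Z U α →
      ∃ β : ↥T →L[ℂ] ↥U, IsTROHom T U β ∧ ∀ z, β (ρ z) = α z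




namespace Stmt4Aux

open ContinuousLinearMap InnerProduct

variable (E : Type*) [NormedAddCommGroup E] [InnerProductSpace ℂ E] [CompleteSpace E]

local notation "⟪" x ", " y "⟫" => @inner ℂ _ _ x y

/-- A Hilbert basis index set for `E`. -/
def hbSet : Set E := (exists_hilbertBasis (𝕜 := ℂ) (E := E)).choose

/-- A Hilbert basis of `E`. -/
def hb : HilbertBasis (hbSet E) ℂ E :=
  (exists_hilbertBasis (𝕜 := ℂ) (E := E)).choose_spec.choose

variable {E}

/-- A conjugation (antiunitary involution) on `E`. -/
def cnj (v : E) : E := (hb E).repr.symm (star ((hb E).repr v))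

@[simp] lemma cnj_cnj (v : E) : cnj (cnj v) = v := by
  simp [cnj]

lemma cnj_add (u v : E) : cnj (u + v) = cnj u + cnj v := by
  simp [cnj, star_add, map_add]

lemma cnj_smul (c : ℂ) (v : E) : cnj (c • v) = (starRingEnd ℂ) c • cnj v := by
  simp [cnj, _root_.map_smul, star_smul, RCLike.star_def]

lemma norm_cnj (v : E) : ‖cnj v‖ = ‖v‖ := by
  simp [cnj]

lemma inner_cnj (u v : E) : ⟪cnj u, cnj v⟫ = ⟪v, u⟫ := by
  rw [cnj, cnj, (hb E).repr.symm.inner_map_map, ← (hb E).repr.inner_map_map v u,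
    lp.inner_eq_tsum, lp.inner_eq_tsum]
  congr 1
  funext i
  simp [RCLike.inner_apply, mul_comm]

lemma inner_cnj_left (u v : E) : ⟪cnj u, v⟫ = ⟪cnj v, u⟫ := by
  conv_lhs => rw [← cnj_cnj v]
  rw [inner_cnj]

lemma inner_cnj_right (u v : E) : ⟪u, cnj v⟫ = ⟪v, cnj u⟫ := by
  rw [← inner_conj_symm, inner_cnj_left, inner_conj_symm]

/-- The transpose `x ↦ C x* C` of an operator w.r.t. the conjugation. -/
def tauFun (A : E →L[ℂ] E) : E →L[ℂ] E :=
  LinearMap.mkContinuous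
    { toFun := fun v => cnj ((star A) (cnj v))
      map_add' := fun u v => by simp [cnj_add, map_add]
      map_smul' := fun c v => by
        simp [cnj_smul, _root_.map_smul] }
    ‖A‖ (fun v => by
      simp only [LinearMap.coe_mk, AddHom.coe_mk]
      rw [norm_cnj, star_eq_adjoint]
      calc ‖(adjoint A) (cnj v)‖ ≤ ‖adjoint A‖ * ‖cnj v‖ := (adjoint A).le_opNorm _
        _ = ‖A‖ * ‖v‖ := by rw [norm_cnj, LinearIsometryEquiv.norm_map])

@[simp] lemma tauFun_apply (A : E →L[ℂ] E) (v : E) : tauFun A v = cnj ((star A) (cnj v)) := rfl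

lemma tauFun_star (A : E →L[ℂ] E) : tauFun (star A) = star (tauFun A) := by
  rw [star_eq_adjoint (tauFun A)]
  refine (eq_adjoint_iff (tauFun (star A)) (tauFun A)).mpr fun x y => ?_
  rw [tauFun_apply, tauFun_apply, star_star, inner_cnj_left, inner_cnj_right,
    star_eq_adjoint, adjoint_inner_left]

lemma tauFun_mul (A B C : E →L[ℂ] E) :
    tauFun (A * star B * C) = tauFun C * star (tauFun B) * tauFun A := by
  rw [← tauFun_star B]
  ext v
  simp [tauFun_apply, cnj_cnj, StarMul.star_mul, star_star, ContinuousLinearMap.mul_apply]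

lemma tauFun_tau (A : E →L[ℂ] E) : tauFun (tauFun A) = A := by
  ext v
  rw [tauFun_apply, ← tauFun_star]
  simp [tauFun_apply, cnj_cnj, star_star]

lemma tauFun_add (A B : E →L[ℂ] E) : tauFun (A + B) = tauFun A + tauFun B := by
  ext v; simp [tauFun_apply, star_add, cnj_add, ContinuousLinearMap.add_apply]

lemma tauFun_smul (c : ℂ) (A : E →L[ℂ] E) : tauFun (c • A) = c • tauFun A := by
  ext v; simp [tauFun_apply, star_smul, cnj_smul, ContinuousLinearMap.smul_apply]

lemma tauFun_norm_le (A : E →L[ℂ] E) : ‖tauFun A‖ ≤ ‖A‖ :=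
  LinearMap.mkContinuous_norm_le _ (norm_nonneg A) _

/-- The transpose as a continuous linear map on `B(E)`. -/
def tauL : (E →L[ℂ] E) →L[ℂ] (E →L[ℂ] E) :=
  LinearMap.mkContinuous
    { toFun := tauFun, map_add' := tauFun_add, map_smul' := tauFun_smul }
    1 (fun A => by simpa using tauFun_norm_le A)

@[simp] lemma tauL_apply (A : E →L[ℂ] E) : tauL A = tauFun A := rfl

end Stmt4Aux

/-- the canonical TRO-antiautomorphism of order 2 on the universal
enveloping TRO. -/
theorem stmt_4 (H₀ Hh : HilbertC) (Z : Submodule ℂ (BH H₀)) (hZ : IsJCTriple Z)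
    (T : Submodule ℂ (BH Hh)) (ρ : ↥Z →L[ℂ] ↥T) (hT : IsUnivTRO Z T ρ) :
    ∃ θ : ↥T →L[ℂ] ↥T, Function.Bijective θ ∧
      (∀ x y z w : ↥T, (w : BH Hh) = (x : BH Hh) * star (y : BH Hh) * (z : BH Hh) →
        ((θ w : BH Hh)) = (θ z : BH Hh) * star ((θ y : BH Hh)) * ((θ x : BH Hh))) ∧
      (∀ t, θ (θ t) = t) ∧ (∀ z, θ (ρ z) = ρ z) := by
  classical
  obtain ⟨⟨hTclosed, hTter⟩, hρtri, hgen, huniv⟩ := hT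
  set τ : BH Hh →L[ℂ] BH Hh := Stmt4Aux.tauL with hτ
  have hτ_apply : ∀ A : BH Hh, τ A = Stmt4Aux.tauFun A := fun A => rfl
  set U : Submodule ℂ (BH Hh) := T.map (τ : BH Hh →ₗ[ℂ] BH Hh) with hUdef
  have hmemU : ∀ x : BH Hh, x ∈ U ↔ ∃ a ∈ T, Stmt4Aux.tauFun a = x := by
    intro x
    simp [hUdef, Submodule.mem_map, hτ_apply]
  have hUcar : (U : Set (BH Hh)) = Stmt4Aux.tauFun ⁻¹' (T : Set (BH Hh)) := by
    ext x
    simp only [SetLike.mem_coe, hmemU, Set.mem_preimage]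
    constructor
    · rintro ⟨a, ha, rfl⟩
      rwa [Stmt4Aux.tauFun_tau]
    · intro hx
      exact ⟨Stmt4Aux.tauFun x, hx, Stmt4Aux.tauFun_tau x⟩
  have hτcont : Continuous (Stmt4Aux.tauFun : BH Hh → BH Hh) := τ.continuous
  have hUclosed : IsClosed (U : Set (BH Hh)) := by
    rw [hUcar]; exact hTclosed.preimage hτcont
  have hUter : ∀ x ∈ U, ∀ y ∈ U, ∀ z ∈ U, x * star y * z ∈ U := by
    intro x hx y hy z hz
    obtain ⟨a, ha, rfl⟩ := (hmemU x).mp hx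
    obtain ⟨b, hb, rfl⟩ := (hmemU y).mp hy
    obtain ⟨c, hc, rfl⟩ := (hmemU z).mp hz
    exact (hmemU _).mpr ⟨c * star b * a, hTter c hc b hb a ha,
      (Stmt4Aux.tauFun_mul c b a)⟩
  have hU : IsTROsub U := ⟨hUclosed, hUter⟩
  have hραmem : ∀ z : ↥Z, (τ.comp (T.subtypeL.comp ρ)) z ∈ U := fun z =>
    (hmemU _).mpr ⟨(ρ z : BH Hh), (ρ z).2, rfl⟩
  set α : ↥Z →L[ℂ] ↥U := (τ.comp (T.subtypeL.comp ρ)).codRestrict U hραmem with hαdef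
  have hαcoe : ∀ z : ↥Z, (α z : BH Hh) = Stmt4Aux.tauFun (ρ z : BH Hh) := fun z => rfl
  have hτjtp : ∀ a b c : BH Hh,
      Stmt4Aux.tauFun (jtp a b c) = jtp (Stmt4Aux.tauFun a) (Stmt4Aux.tauFun b)
        (Stmt4Aux.tauFun c) := by
    intro a b c
    rw [jtp, Stmt4Aux.tauFun_smul, Stmt4Aux.tauFun_add, Stmt4Aux.tauFun_mul,
      Stmt4Aux.tauFun_mul, jtp, add_comm]
  have hα : IsTripleHomInto Z U α := by
    intro x y z w hw
    rw [hαcoe, hαcoe, hαcoe, hαcoe, hρtri x y z w hw, hτjtp]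
  obtain ⟨β, hβ, hβρ⟩ := huniv Hh U hU α hα
  have hθmem : ∀ t : ↥T, (τ.comp (U.subtypeL.comp β)) t ∈ T := by
    intro t
    obtain ⟨s, hs, hse⟩ := (hmemU _).mp (β t).2
    show Stmt4Aux.tauFun ((β t : BH Hh)) ∈ T
    rw [← hse, Stmt4Aux.tauFun_tau]
    exact hs
  set θ : ↥T →L[ℂ] ↥T := (τ.comp (U.subtypeL.comp β)).codRestrict T hθmem with hθdef
  have hθcoe : ∀ t : ↥T, (θ t : BH Hh) = Stmt4Aux.tauFun ((β t : BH Hh)) := fun t => rfl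
  have hanti : ∀ x y z w : ↥T, (w : BH Hh) = (x : BH Hh) * star (y : BH Hh) * (z : BH Hh) →
      ((θ w : BH Hh)) = (θ z : BH Hh) * star ((θ y : BH Hh)) * ((θ x : BH Hh)) := by
    intro x y z w h
    rw [hθcoe, hβ x y z w h, Stmt4Aux.tauFun_mul, ← hθcoe, ← hθcoe, ← hθcoe]
  have hθρ : ∀ z, θ (ρ z) = ρ z := by
    intro z
    apply Subtype.ext
    rw [hθcoe, hβρ z, hαcoe, Stmt4Aux.tauFun_tau]
  have hθθ : ∀ t, θ (θ t) = t := by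
    set D : ↥T →L[ℂ] ↥T := θ.comp θ - ContinuousLinearMap.id ℂ ↥T with hDdef
    have hD_apply : ∀ t : ↥T, D t = θ (θ t) - t := fun t => rfl
    set Kk : Submodule ℂ ↥T := LinearMap.ker (D : ↥T →ₗ[ℂ] ↥T) with hKdef
    have hmemK : ∀ t : ↥T, t ∈ Kk ↔ θ (θ t) = t := by
      intro t
      rw [hKdef, LinearMap.mem_ker]
      show D t = 0 ↔ _
      rw [hD_apply, sub_eq_zero]
    set W : Submodule ℂ (BH Hh) := Kk.map T.subtype with hWdef
    have hmemW : ∀ x : BH Hh, x ∈ W ↔ ∃ t : ↥T, t ∈ Kk ∧ (t : BH Hh) = x := by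
      intro x; simp [hWdef, Submodule.mem_map]
    have hWclosed : IsClosed (W : Set (BH Hh)) := by
      have hKc : IsClosed (Kk : Set ↥T) := by
        have : (Kk : Set ↥T) = D ⁻¹' {0} := by
          ext t; simp [hKdef, LinearMap.mem_ker]
        rw [this]
        exact isClosed_singleton.preimage D.continuous
      have hemb : Topology.IsClosedEmbedding ((↑) : ↥T → BH Hh) :=
        hTclosed.isClosedEmbedding_subtypeVal
      have himg : IsClosed (Subtype.val '' (Kk : Set ↥T)) := hemb.isClosedMap _ hKc
      convert himg using 1
      simp [hWdef]
    have hWrange : (Set.range fun z : ↥Z => (ρ z : BH Hh)) ⊆ W := by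
      rintro x ⟨z, rfl⟩
      exact (hmemW _).mpr ⟨ρ z, (hmemK _).mpr (by rw [hθρ z, hθρ z]), rfl⟩
    have hWter : ∀ x ∈ W, ∀ y ∈ W, ∀ z ∈ W, x * star y * z ∈ W := by
      intro x hx y hy z hz
      obtain ⟨x', hx', rfl⟩ := (hmemW x).mp hx
      obtain ⟨y', hy', rfl⟩ := (hmemW y).mp hy
      obtain ⟨z', hz', rfl⟩ := (hmemW z).mp hz
      have hpmem : (x' : BH Hh) * star (y' : BH Hh) * (z' : BH Hh) ∈ T :=
        hTter _ x'.2 _ y'.2 _ z'.2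
      set p : ↥T := ⟨(x' : BH Hh) * star (y' : BH Hh) * (z' : BH Hh), hpmem⟩ with hpdef
      have h1 : (θ p : BH Hh) = (θ z' : BH Hh) * star ((θ y' : BH Hh)) * ((θ x' : BH Hh)) :=
        hanti x' y' z' p rfl
      have h2 : (θ (θ p) : BH Hh)
          = (θ (θ x') : BH Hh) * star ((θ (θ y') : BH Hh)) * ((θ (θ z') : BH Hh)) :=
        hanti (θ z') (θ y') (θ x') (θ p) h1
      rw [(hmemK x').mp hx', (hmemK y').mp hy', (hmemK z').mp hz'] at h2
      exact (hmemW _).mpr ⟨p, (hmemK p).mpr (Subtype.ext h2), rfl⟩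
    have hTW : T ≤ W := by
      rw [← hgen]
      exact sInf_le ⟨hWclosed, hWrange, hWter⟩
    intro t
    obtain ⟨k, hk, hke⟩ := (hmemW (t : BH Hh)).mp (hTW t.2)
    have : k = t := Subtype.ext hke
    rw [← this]
    exact (hmemK k).mp hk
  refine ⟨θ, ⟨Function.LeftInverse.injective hθθ, Function.RightInverse.surjective hθθ⟩,
    hanti, hθθ, hθρ⟩
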